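/- arXiv:1504.03263 — 3 statements merged into one kernel-verified Lean document; each statement's English description precedes it below -/
import Mathlib

section
/- Let (f_{ij})_{1≤i,j≤n} be arithmetic functions and a_i, b_i (1 ≤ i ≤ n) positive real numbers such that a_i·b_j ≤ v(f_{ij}) for all i,j. Then the determinant of the matrix (f_{ij}) computed in the Dirichlet convolution ring, evaluated at the product ∏_k a_k b_k, equals the complex determinant det(f_{ij}(a_i b_j)). -/
open ArithmeticFunction
open scoped Classical

/-- The embedding of `ℂ` into the Dirichlet ring of arithmetic functions,
sending `c` to the function with value `c` at `1` and `0` elsewhere. -/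
noncomputable def CC : ℂ →+* ArithmeticFunction ℂ where
  toFun c := ⟨fun n => if n = 1 then c else 0, by simp⟩
  map_zero' := by ext n; simp
  map_one' := by ext n; simp [ArithmeticFunction.one_apply]
  map_add' a b := by ext n; erw [ArithmeticFunction.add_apply]; by_cases h : n = 1 <;> simp [h]
  map_mul' a b := by
    ext n
    erw [ArithmeticFunction.mul_apply]
    by_cases h : n = 1
    · subst h
      rw [show Nat.divisorsAntidiagonal 1 = {(1,1)} from rfl]
      simp
    · rw [Finset.sum_eq_zero]
      · simp [h]
      · rintro ⟨d, e⟩ hde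
        rw [Nat.mem_divisorsAntidiagonal] at hde
        rcases Decidable.eq_or_ne d 1 with hd | hd
        · have : e ≠ 1 := by rintro rfl; exact h (by simp [← hde.1, hd])
          simp [this]
        · simp [hd]

/-- The order `v f` of an arithmetic function: the least element of the support
(`sInf` of the empty set is `0` for `f = 0`; that case is always excluded by hypotheses). -/
noncomputable def ordN (f : ArithmeticFunction ℂ) : ℕ := sInf {n : ℕ | f n ≠ 0}

/-- The order as an extended natural number, `⊤` for `f = 0`. -/
noncomputable def ordE (f : ArithmeticFunction ℂ) : ℕ∞ :=
  sInf ((fun n : ℕ => (n : ℕ∞)) '' {n : ℕ | f n ≠ 0})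

/-- The norm `‖f‖ = 1/v(f)`, with `1/∞ = 0`. -/
noncomputable def nrm (f : ArithmeticFunction ℂ) : ℝ :=
  if f = 0 then 0 else 1 / (ordN f : ℝ)

/-- Extension of an arithmetic function to `ℝ`, vanishing off `ℕ`. -/
noncomputable def extR (f : ArithmeticFunction ℂ) (x : ℝ) : ℂ :=
  if h : ∃ n : ℕ, (n : ℝ) = x then f h.choose else 0

/-- The exponential map `Exp f = exp(f 1) * ∑ (f - f 1)^k / k!` of the Dirichlet ring.
Since `(f - f 1)^k` has order `≥ 2^k`, the value of the infinite series at `n` equals the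
value of the partial sum up to `k = n`. -/
noncomputable def ExpA (f : ArithmeticFunction ℂ) : ArithmeticFunction ℂ :=
  ⟨fun n => Complex.exp (f 1) *
      ((∑ k ∈ Finset.range (n + 1),
        CC ((Nat.factorial k : ℂ)⁻¹) * (f - CC (f 1)) ^ k) n), by simp⟩

/-- The `p`-basic derivation `(∂_p f) n = v_p (n p) • f (n p)`. -/
noncomputable def DP (p : ℕ) (f : ArithmeticFunction ℂ) : ArithmeticFunction ℂ :=
  ⟨fun n => (padicValNat p (n * p) : ℂ) * f (n * p), by simp⟩

/-- The log-derivation `(∂_L f) n = log n * f n`. -/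
noncomputable def DL (f : ArithmeticFunction ℂ) : ArithmeticFunction ℂ :=
  ⟨fun n => (Real.log n : ℂ) * f n, by simp⟩

/-- The pointwise multiplication operator `𝔪_g`. -/
noncomputable def MG (g f : ArithmeticFunction ℂ) : ArithmeticFunction ℂ :=
  ⟨fun n => g n * f n, by simp⟩

/-- Integer powers `𝔪_g^i` of the pointwise multiplication operator:
`(𝔪_g^i f) n = (g n)^i * f n`. -/
noncomputable def MGi (g : ArithmeticFunction ℂ) (i : ℤ) (f : ArithmeticFunction ℂ) :
    ArithmeticFunction ℂ := ⟨fun n => g n ^ i * f n, by simp⟩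

/-- `D` is a (ℂ-linear) derivation of the ring of arithmetic functions
under Dirichlet convolution. -/
def IsDerivationA (D : ArithmeticFunction ℂ → ArithmeticFunction ℂ) : Prop :=
  (∀ f g, D (f + g) = D f + D g) ∧
  (∀ (c : ℂ) (f), D (CC c * f) = CC c * D f) ∧
  (∀ f g, D (f * g) = D f * g + f * D g)

/-- Convergence of a sequence of arithmetic functions in the norm topology. -/
def TendstoA (s : ℕ → ArithmeticFunction ℂ) (l : ArithmeticFunction ℂ) : Prop :=
  Filter.Tendsto (fun m => nrm (s m - l)) Filter.atTop (nhds 0)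

/-- (Sequential) continuity of a map in the norm topology, which for this
ultrametric is equivalent to continuity. -/
def ContinuousA (D : ArithmeticFunction ℂ → ArithmeticFunction ℂ) : Prop :=
  ∀ (s : ℕ → ArithmeticFunction ℂ) (l), TendstoA s l → TendstoA (fun m => D (s m)) (D l)

/-- The indicator function `e_m` of the singleton `{m}`. -/
noncomputable def En (m : ℕ) : ArithmeticFunction ℂ :=
  ⟨fun n => if 0 < n ∧ n = m then 1 else 0, by simp⟩

/-- The constant one arithmetic function `𝟙`. -/
noncomputable def OneA : ArithmeticFunction ℂ := ⟨fun n => if n = 0 then 0 else 1, by simp⟩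

/-- The ℂ-algebra structure of the ring of arithmetic functions, via `CC`. -/
noncomputable instance : Algebra ℂ (ArithmeticFunction ℂ) := CC.toAlgebra

lemma extR_natCast (f : ArithmeticFunction ℂ) (N : ℕ) : extR f (N : ℝ) = f N := by
  have h : ∃ n : ℕ, (n : ℝ) = (N : ℝ) := ⟨N, rfl⟩
  simp only [extR, dif_pos h]
  exact congrArg f (Nat.cast_injective h.choose_spec)

lemma extR_not (f : ArithmeticFunction ℂ) (x : ℝ) (h : ¬∃ n : ℕ, (n : ℝ) = x) :
    extR f x = 0 := by simp only [extR, dif_neg h]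

lemma eq_of_le_mul {cf cg x y : ℝ} (hcf : 0 < cf) (hcg : 0 < cg) (h1 : cf ≤ x)
    (h2 : cg ≤ y) (h : x * y = cf * cg) : x = cf ∧ y = cg := by
  constructor <;> nlinarith

lemma mul_ord (f g : ArithmeticFunction ℂ) (cf cg : ℝ) (hcf : 0 < cf) (hcg : 0 < cg)
    (hf : ∀ m : ℕ, f m ≠ 0 → cf ≤ m) (hg : ∀ m : ℕ, g m ≠ 0 → cg ≤ m) :
    ∀ m : ℕ, (f * g) m ≠ 0 → cf * cg ≤ m := by
  intro m hm
  rw [ArithmeticFunction.mul_apply] at hm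
  obtain ⟨p, hp, hne⟩ := Finset.exists_ne_zero_of_sum_ne_zero hm
  rw [Nat.mem_divisorsAntidiagonal] at hp
  have h1 : cf ≤ (p.1 : ℝ) := hf p.1 (fun h => hne (by simp [h]))
  have h2 : cg ≤ (p.2 : ℝ) := hg p.2 (fun h => hne (by simp [h]))
  calc cf * cg ≤ (p.1 : ℝ) * (p.2 : ℝ) :=
        mul_le_mul h1 h2 (le_of_lt hcg) (le_trans (le_of_lt hcf) h1)
    _ = (m : ℝ) := by rw [← Nat.cast_mul, hp.1]

lemma extR_mul (f g : ArithmeticFunction ℂ) (cf cg : ℝ) (hcf : 0 < cf) (hcg : 0 < cg)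
    (hf : ∀ m : ℕ, f m ≠ 0 → cf ≤ m) (hg : ∀ m : ℕ, g m ≠ 0 → cg ≤ m) :
    extR (f * g) (cf * cg) = extR f cf * extR g cg := by
  by_cases hN : ∃ N : ℕ, (N : ℝ) = cf * cg
  · obtain ⟨N, hNeq⟩ := hN
    rw [← hNeq, extR_natCast, ArithmeticFunction.mul_apply]
    have key : ∀ p : ℕ × ℕ, p ∈ Nat.divisorsAntidiagonal N → f p.1 * g p.2 ≠ 0 →
        (p.1 : ℝ) = cf ∧ (p.2 : ℝ) = cg := by
      intro p hp hne
      rw [Nat.mem_divisorsAntidiagonal] at hp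
      have h1 : cf ≤ (p.1 : ℝ) := hf p.1 (fun h => hne (by simp [h]))
      have h2 : cg ≤ (p.2 : ℝ) := hg p.2 (fun h => hne (by simp [h]))
      have hprod : (p.1 : ℝ) * (p.2 : ℝ) = cf * cg := by
        rw [← Nat.cast_mul, hp.1, hNeq]
      exact eq_of_le_mul hcf hcg h1 h2 hprod
    by_cases h1 : (∃ d : ℕ, (d : ℝ) = cf) ∧ (∃ e : ℕ, (e : ℝ) = cg)
    · obtain ⟨⟨d, hd⟩, ⟨e, he⟩⟩ := h1
      have hNde : N = d * e := by
        have : (N : ℝ) = ((d * e : ℕ) : ℝ) := by push_cast; rw [hNeq, ← hd, ← he]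
        exact Nat.cast_injective this
      have hd0 : 0 < d := by
        have : (0 : ℝ) < (d : ℝ) := by rw [hd]; exact hcf
        exact_mod_cast this
      have he0 : 0 < e := by
        have : (0 : ℝ) < (e : ℝ) := by rw [he]; exact hcg
        exact_mod_cast this
      have hmem : (d, e) ∈ Nat.divisorsAntidiagonal N := by
        rw [Nat.mem_divisorsAntidiagonal, hNde]
        exact ⟨rfl, by positivity⟩
      rw [Finset.sum_eq_single_of_mem (d, e) hmem, ← hd, ← he, extR_natCast, extR_natCast]
      intro p hp hpne
      by_contra hne
      obtain ⟨e1, e2⟩ := key p hp hne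
      apply hpne
      have : p.1 = d := Nat.cast_injective (by rw [e1, hd])
      have : p.2 = e := Nat.cast_injective (by rw [e2, he])
      ext <;> simp_all
    · rw [Finset.sum_eq_zero, eq_comm]
      · rcases not_and_or.mp h1 with h | h
        · rw [extR_not f cf h, zero_mul]
        · rw [extR_not g cg h, mul_zero]
      · intro p hp
        by_contra hne
        obtain ⟨e1, e2⟩ := key p hp hne
        exact h1 ⟨⟨p.1, e1⟩, ⟨p.2, e2⟩⟩
  · rw [extR_not _ _ hN]
    rcases Classical.em (∃ d : ℕ, (d : ℝ) = cf) with ⟨d, hd⟩ | h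
    · rcases Classical.em (∃ e : ℕ, (e : ℝ) = cg) with ⟨e, he⟩ | h
      · exact absurd ⟨d * e, by push_cast; rw [hd, he]⟩ hN
      · rw [extR_not g cg h, mul_zero]
    · rw [extR_not f cf h, zero_mul]

lemma prod_ord {ι : Type*} (s : Finset ι) (g : ι → ArithmeticFunction ℂ) (c : ι → ℝ)
    (hc : ∀ i ∈ s, 0 < c i) (hord : ∀ i ∈ s, ∀ m : ℕ, g i m ≠ 0 → c i ≤ m) :
    ∀ m : ℕ, (∏ i ∈ s, g i) m ≠ 0 → ∏ i ∈ s, c i ≤ m := by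
  induction s using Finset.induction with
  | empty =>
    intro m hm
    rw [Finset.prod_empty] at hm
    rw [ArithmeticFunction.one_apply] at hm
    have : m = 1 := by by_contra h; simp [h] at hm
    simp [this]
  | @insert x s' hi ih =>
    rw [Finset.prod_insert hi, Finset.prod_insert hi]
    exact mul_ord _ _ _ _ (hc x (Finset.mem_insert_self x s'))
      (Finset.prod_pos fun i hi' => hc i (Finset.mem_insert_of_mem hi'))
      (hord x (Finset.mem_insert_self x s'))
      (ih (fun i hi' => hc i (Finset.mem_insert_of_mem hi'))
        (fun i hi' => hord i (Finset.mem_insert_of_mem hi')))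

lemma extR_prod {ι : Type*} (s : Finset ι) (g : ι → ArithmeticFunction ℂ) (c : ι → ℝ)
    (hc : ∀ i ∈ s, 0 < c i) (hord : ∀ i ∈ s, ∀ m : ℕ, g i m ≠ 0 → c i ≤ m) :
    extR (∏ i ∈ s, g i) (∏ i ∈ s, c i) = ∏ i ∈ s, extR (g i) (c i) := by
  induction s using Finset.induction with
  | empty =>
    rw [Finset.prod_empty, Finset.prod_empty, Finset.prod_empty,
      show (1 : ℝ) = ((1 : ℕ) : ℝ) by norm_num, extR_natCast]
    simp [ArithmeticFunction.one_apply]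
  | @insert x s' hi ih =>
    rw [Finset.prod_insert hi, Finset.prod_insert hi, Finset.prod_insert hi,
      extR_mul _ _ _ _ (hc x (Finset.mem_insert_self x s'))
        (Finset.prod_pos fun i hi' => hc i (Finset.mem_insert_of_mem hi'))
        (hord x (Finset.mem_insert_self x s'))
        (prod_ord s' g c (fun i hi' => hc i (Finset.mem_insert_of_mem hi'))
          (fun i hi' => hord i (Finset.mem_insert_of_mem hi'))),
      ih (fun i hi' => hc i (Finset.mem_insert_of_mem hi'))
        (fun i hi' => hord i (Finset.mem_insert_of_mem hi'))]

/-- Evaluation at `N` as an additive monoid hom. -/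
noncomputable def evalA (N : ℕ) : ArithmeticFunction ℂ →+ ℂ where
  toFun f := f N
  map_zero' := by simp
  map_add' f g := by simp

/-- If `a i * b j ≤ v (f i j)` for all `i, j`, then the determinant of `(f i j)` in the
Dirichlet convolution ring, evaluated at `∏ a k * b k`, equals `det (f i j (a i * b j))`. -/
theorem stmt1 (n : ℕ) (f : Fin n → Fin n → ArithmeticFunction ℂ) (a b : Fin n → ℝ)
    (ha : ∀ i, 0 < a i) (hb : ∀ i, 0 < b i)
    (hord : ∀ i j, ∀ m : ℕ, (f i j) m ≠ 0 → a i * b j ≤ m) :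
    extR (Matrix.det (Matrix.of fun i j => f i j)) (∏ k, a k * b k)
      = Matrix.det (Matrix.of fun i j => extR (f i j) (a i * b j)) := by
  have hprod : ∀ sg : Equiv.Perm (Fin n), ∏ i, (a (sg i) * b i) = ∏ k, a k * b k := by
    intro sg
    rw [Finset.prod_mul_distrib, Finset.prod_mul_distrib, Equiv.prod_comp sg a]
  have hc : ∀ (sg : Equiv.Perm (Fin n)) (i : Fin n), 0 < a (sg i) * b i :=
    fun sg i => mul_pos (ha _) (hb _)
  have key : ∀ sg : Equiv.Perm (Fin n),
      extR (∏ i, f (sg i) i) (∏ k, a k * b k)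
        = ∏ i, extR (f (sg i) i) (a (sg i) * b i) := by
    intro sg
    rw [← hprod sg]
    exact extR_prod Finset.univ (fun i => f (sg i) i) (fun i => a (sg i) * b i)
      (fun i _ => hc sg i) (fun i _ m hm => hord (sg i) i m hm)
  rw [Matrix.det_apply, Matrix.det_apply]
  by_cases hx : ∃ N : ℕ, (N : ℝ) = ∏ k, a k * b k
  · obtain ⟨N, hN⟩ := hx
    rw [← hN, extR_natCast]
    have : ∀ F : ArithmeticFunction ℂ, F N = evalA N F := fun _ => rfl
    rw [this, map_sum]
    apply Finset.sum_congr rfl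
    intro sg _
    rw [Units.smul_def, Units.smul_def, AddMonoidHom.map_zsmul]
    congr 1
    have : evalA N (∏ i, (Matrix.of fun i j => f i j) (sg i) i)
        = extR (∏ i, f (sg i) i) ((N : ℝ)) := (extR_natCast _ N).symm
    rw [this, hN, key sg]
    rfl
  · rw [extR_not _ _ hx, eq_comm]
    apply Finset.sum_eq_zero
    intro sg _
    rw [Units.smul_def]
    convert smul_zero _
    by_contra hne
    simp only [Matrix.of_apply] at hne
    have hne' : ∀ i ∈ Finset.univ, extR (f (sg i) i) (a (sg i) * b i) ≠ 0 :=
      Finset.prod_ne_zero_iff.mp hne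
    have hex : ∀ i : Fin n, ∃ m : ℕ, (m : ℝ) = a (sg i) * b i := by
      intro i
      by_contra h
      exact hne' i (Finset.mem_univ i) (extR_not _ _ h)
    choose m hm using hex
    exact hx ⟨∏ i, m i, by push_cast; rw [Finset.prod_congr rfl fun i _ => hm i, hprod sg]⟩
end

section
/- The Rearick logarithm κ = Log(𝟙) of the constant-one arithmetic function satisfies: κ(n) = 1/j if n = p^j for some prime p and j ≥ 1, and κ(n) = 0 otherwise (in particular κ(1) = 0). Equivalently, ∂_L κ = Λ, the von Mangoldt function, where ∂_L is the log-derivation. -/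
open ArithmeticFunction
open scoped Classical

section Aux

open Finset ArithmeticFunction

lemma CC_apply (c : ℂ) (n : ℕ) : CC c n = if n = 1 then c else 0 := rfl

lemma DL_apply (f : ArithmeticFunction ℂ) (n : ℕ) :
    DL f n = ((Real.log n : ℝ) : ℂ) * f n := rfl

lemma sum_apply' {s : Finset ℕ} (F : ℕ → ArithmeticFunction ℂ) (n : ℕ) :
    (∑ k ∈ s, F k) n = ∑ k ∈ s, F k n := by
  classical
  induction s using Finset.cons_induction with
  | empty => simp
  | cons a s ha ih => rw [Finset.sum_cons, Finset.sum_cons, ArithmeticFunction.add_apply, ih]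

lemma CC_mul_apply (c : ℂ) (g : ArithmeticFunction ℂ) (n : ℕ) :
    (CC c * g) n = c * g n := by
  rcases Nat.eq_zero_or_pos n with rfl | hn
  · simp
  rw [ArithmeticFunction.mul_apply, Finset.sum_eq_single (1, n)]
  · simp [CC_apply]
  · rintro ⟨d, e⟩ hde hne
    obtain ⟨h1, h0⟩ := Nat.mem_divisorsAntidiagonal.mp hde
    have hd : d ≠ 1 := by
      rintro rfl
      exact hne (by simp only [one_mul] at h1; rw [h1])
    simp [CC_apply, hd]
  · intro h
    exact absurd (Nat.mem_divisorsAntidiagonal.mpr ⟨one_mul n, hn.ne'⟩) h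

lemma DL_one_apply (n : ℕ) : DL (1 : ArithmeticFunction ℂ) n = 0 := by
  rcases eq_or_ne n 1 with rfl | h
  · simp [DL_apply]
  · simp [DL_apply, ArithmeticFunction.one_apply, h]

lemma DL_mul (f g : ArithmeticFunction ℂ) : DL (f * g) = DL f * g + f * DL g := by
  ext n
  rcases Nat.eq_zero_or_pos n with rfl | hn
  · simp only [DL_apply, ArithmeticFunction.add_apply, Nat.cast_zero, Real.log_zero,
      Complex.ofReal_zero, zero_mul]
    rw [ArithmeticFunction.map_zero, ArithmeticFunction.map_zero, add_zero]
  simp only [DL_apply, ArithmeticFunction.add_apply, ArithmeticFunction.mul_apply,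
    ← Finset.sum_add_distrib, Finset.mul_sum]
  refine Finset.sum_congr rfl fun p hp => ?_
  obtain ⟨h1, h0⟩ := Nat.mem_divisorsAntidiagonal.mp hp
  have hd : (p.1 : ℝ) ≠ 0 := by
    exact_mod_cast fun h => h0 (by rw [← h1]; exact_mod_cast (by rw [h]; ring : p.1 * p.2 = 0))
  have he : (p.2 : ℝ) ≠ 0 := by
    exact_mod_cast fun h => h0 (by rw [← h1]; exact_mod_cast (by rw [h]; ring : p.1 * p.2 = 0))
  rw [← h1]
  push_cast
  rw [Real.log_mul hd he]
  push_cast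
  ring

lemma mul_apply_scaled (c : ℂ) {g h : ArithmeticFunction ℂ} (f : ArithmeticFunction ℂ)
    (hgh : ∀ m, g m = c * h m) (n : ℕ) : (g * f) n = c * (h * f) n := by
  simp only [ArithmeticFunction.mul_apply, Finset.mul_sum]
  exact Finset.sum_congr rfl fun p _ => by rw [hgh p.1, mul_assoc]

lemma DL_pow (f : ArithmeticFunction ℂ) :
    ∀ (k n : ℕ), DL (f ^ (k + 1)) n = ((k : ℂ) + 1) * (f ^ k * DL f) n := by
  intro k
  induction k with
  | zero => intro n; simp [pow_one, pow_zero, one_mul]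
  | succ k ih =>
    intro n
    have h1 : f ^ (k + 1 + 1) = f ^ (k + 1) * f := pow_succ f (k + 1)
    rw [h1, DL_mul, ArithmeticFunction.add_apply]
    have h2 : (DL (f ^ (k + 1)) * f) n = ((k : ℂ) + 1) * ((f ^ k * DL f) * f) n :=
      mul_apply_scaled _ f ih n
    have h3 : (f ^ k * DL f) * f = f ^ (k + 1) * DL f := by ring
    rw [h2, h3]
    push_cast
    ring

lemma pow_low (f : ArithmeticFunction ℂ) (hf : f 1 = 0) :
    ∀ k m, m < 2 ^ k → (f ^ k) m = 0 := by
  intro k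
  induction k with
  | zero =>
    intro m hm
    interval_cases m
    simp
  | succ k ih =>
    intro m hm
    rw [pow_succ, ArithmeticFunction.mul_apply]
    refine Finset.sum_eq_zero fun p hp => ?_
    obtain ⟨h1, h0⟩ := Nat.mem_divisorsAntidiagonal.mp hp
    rcases eq_or_ne p.2 1 with h | h
    · rw [h, hf, mul_zero]
    · have he0 : p.2 ≠ 0 := fun h' => h0 (by rw [← h1, h', mul_zero])
      have he2 : 2 ≤ p.2 := by omega
      have hle : p.1 * 2 ≤ m := by
        calc p.1 * 2 ≤ p.1 * p.2 := Nat.mul_le_mul_left _ he2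
        _ = m := h1
      have hm2 : m < 2 ^ k * 2 := by rw [← pow_succ]; exact hm
      have : p.1 < 2 ^ k := by omega
      rw [ih p.1 this, zero_mul]

lemma ExpA_apply (f : ArithmeticFunction ℂ) (hf : f 1 = 0) (n : ℕ) :
    ExpA f n = ∑ k ∈ Finset.range (n + 1), ((k.factorial : ℂ))⁻¹ * (f ^ k) n := by
  show Complex.exp (f 1) * _ = _
  rw [hf, Complex.exp_zero, one_mul, (map_zero CC), sub_zero, sum_apply']
  exact Finset.sum_congr rfl fun k _ => CC_mul_apply _ _ _

lemma ExpA_apply_big (f : ArithmeticFunction ℂ) (hf : f 1 = 0) (n N : ℕ) (hN : n ≤ N) :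
    ExpA f n = ∑ k ∈ Finset.range (N + 1), ((k.factorial : ℂ))⁻¹ * (f ^ k) n := by
  rw [ExpA_apply f hf n]
  refine Finset.sum_subset (Finset.range_subset_range.mpr (by omega)) fun k _ hk => ?_
  have hk' : n + 1 ≤ k := by
    by_contra h
    exact hk (Finset.mem_range.mpr (by omega))
  have hn2 : n < 2 ^ k := by
    calc n < 2 ^ n := Nat.lt_two_pow_self
    _ ≤ 2 ^ k := Nat.pow_le_pow_right (by norm_num) (by omega)
  rw [pow_low f hf k n hn2, mul_zero]

lemma DL_ExpA (f : ArithmeticFunction ℂ) (hf : f 1 = 0) :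
    DL (ExpA f) = ExpA f * DL f := by
  ext n
  rcases Nat.eq_zero_or_pos n with rfl | hn
  · simp [DL_apply]
  -- RHS computation
  have hRHS : (ExpA f * DL f) n
      = ∑ k ∈ Finset.range (n + 1), ((k.factorial : ℂ))⁻¹ * ((f ^ k * DL f) n) := by
    rw [ArithmeticFunction.mul_apply]
    have step1 : ∀ p ∈ n.divisorsAntidiagonal,
        ExpA f p.1 * DL f p.2
          = ∑ k ∈ Finset.range (n + 1), ((k.factorial : ℂ))⁻¹ * ((f ^ k) p.1 * DL f p.2) := by
      intro p hp
      obtain ⟨h1, h0⟩ := Nat.mem_divisorsAntidiagonal.mp hp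
      have hd : p.1 ≤ n := Nat.le_of_dvd hn ⟨p.2, h1.symm⟩
      rw [ExpA_apply_big f hf p.1 n hd, Finset.sum_mul]
      exact Finset.sum_congr rfl fun k _ => by ring
    rw [Finset.sum_congr rfl step1, Finset.sum_comm]
    refine Finset.sum_congr rfl fun k _ => ?_
    rw [ArithmeticFunction.mul_apply, Finset.mul_sum]
  rw [hRHS]
  -- LHS computation
  have hLHS : DL (ExpA f) n
      = ∑ k ∈ Finset.range (n + 1), ((k.factorial : ℂ))⁻¹ * (DL (f ^ k) n) := by
    rw [DL_apply, ExpA_apply f hf n, Finset.mul_sum]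
    exact Finset.sum_congr rfl fun k _ => by rw [DL_apply]; ring
  rw [hLHS, Finset.sum_range_succ', Finset.sum_range_succ]
  have hlast : (f ^ n * DL f) n = 0 := by
    rw [ArithmeticFunction.mul_apply]
    refine Finset.sum_eq_zero fun p hp => ?_
    obtain ⟨h1, h0⟩ := Nat.mem_divisorsAntidiagonal.mp hp
    have hd : p.1 ≤ n := Nat.le_of_dvd hn ⟨p.2, h1.symm⟩
    have : p.1 < 2 ^ n := lt_of_le_of_lt hd (Nat.lt_two_pow_self (n := n))
    rw [pow_low f hf n p.1 this, zero_mul]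
  rw [hlast, mul_zero, add_zero]
  have h0 : ((Nat.factorial 0 : ℂ))⁻¹ * DL (f ^ 0) n = 0 := by
    rw [pow_zero, DL_one_apply, mul_zero]
  rw [h0, add_zero]
  refine Finset.sum_congr rfl fun k _ => ?_
  rw [DL_pow f k n, Nat.factorial_succ]
  have hk : ((k : ℂ) + 1) ≠ 0 := Nat.cast_add_one_ne_zero k
  have hfac : ((k.factorial : ℂ)) ≠ 0 := by
    exact_mod_cast Nat.factorial_ne_zero k
  push_cast
  field_simp

/-- von Mangoldt as a ℂ-valued arithmetic function -/
noncomputable def LamC : ArithmeticFunction ℂ :=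
  ⟨fun n => ((ArithmeticFunction.vonMangoldt n : ℝ) : ℂ), by simp⟩

lemma OneA_mul_LamC : OneA * LamC = DL OneA := by
  ext n
  rcases Nat.eq_zero_or_pos n with rfl | hn
  · simp [DL_apply]
  rw [ArithmeticFunction.mul_apply, DL_apply]
  have hOne : (OneA n : ℂ) = 1 := by
    show (if n = 0 then (0:ℂ) else 1) = 1
    simp [hn.ne']
  rw [hOne, mul_one]
  have : ∀ p ∈ n.divisorsAntidiagonal, (OneA p.1) * LamC p.2 = LamC p.2 := by
    intro p hp
    obtain ⟨h1, h0⟩ := Nat.mem_divisorsAntidiagonal.mp hp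
    have hd : p.1 ≠ 0 := fun h => h0 (by rw [← h1, h, zero_mul])
    show (if p.1 = 0 then (0:ℂ) else 1) * _ = _
    simp [hd]
  rw [Finset.sum_congr rfl this]
  rw [Nat.sum_divisorsAntidiagonal' (f := fun _ e => LamC e)]
  show (∑ i ∈ n.divisors, ((ArithmeticFunction.vonMangoldt i : ℝ) : ℂ)) = _
  rw [← Complex.ofReal_sum, ArithmeticFunction.vonMangoldt_sum]

lemma OneA_cancel (g : ArithmeticFunction ℂ) (h : OneA * g = 0) : g = 0 := by
  have key : ∀ n, g n = 0 := by
    intro n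
    induction n using Nat.strong_induction_on with
    | _ n ih =>
      rcases Nat.eq_zero_or_pos n with rfl | hn
      · simp
      have h0 : (OneA * g) n = 0 := by rw [h]; simp
      rw [ArithmeticFunction.mul_apply, Finset.sum_eq_single (1, n)] at h0
      · have hOne : (OneA 1 : ℂ) = 1 := by
          show (if (1:ℕ) = 0 then (0:ℂ) else 1) = 1
          simp
        rw [hOne, one_mul] at h0
        simpa using h0
      · rintro ⟨d, e⟩ hde hne
        obtain ⟨h1, hn0⟩ := Nat.mem_divisorsAntidiagonal.mp hde
        have hd : d ≠ 1 := by
          rintro rfl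
          exact hne (by simp only [one_mul] at h1; rw [h1])
        have hd0 : d ≠ 0 := fun hh => hn0 (by rw [← h1, hh, zero_mul])
        have he0 : e ≠ 0 := fun hh => hn0 (by rw [← h1, hh, mul_zero])
        have h1' : d * e = n := h1
        have helt : e < n := by
          have h2e : 2 * e ≤ d * e := Nat.mul_le_mul_right _ (by omega)
          omega
        rw [ih e helt, mul_zero]
      · intro hmem
        exact absurd (Nat.mem_divisorsAntidiagonal.mpr ⟨one_mul n, hn.ne'⟩) hmem
  ext n
  rw [key n, ArithmeticFunction.zero_apply]

end Aux

/-- The Rearick logarithm `κ = Log 𝟙` (characterized by `κ 1 = 0` and `Exp κ = 𝟙`)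
satisfies `κ (p^j) = 1/j` for primes `p` and `j ≥ 1`, and `κ n = 0` otherwise;
equivalently `∂_L κ = Λ`, the von Mangoldt function. -/
theorem stmt7 (κ : ArithmeticFunction ℂ) (hκ1 : κ 1 = 0) (hκ : ExpA κ = OneA) :
    (∀ p j : ℕ, p.Prime → 1 ≤ j → κ (p ^ j) = 1 / (j : ℂ)) ∧
    (∀ n : ℕ, (¬ ∃ p j : ℕ, p.Prime ∧ 1 ≤ j ∧ n = p ^ j) → κ n = 0) ∧
    (∀ n : ℕ, (Real.log n : ℂ) * κ n = ((ArithmeticFunction.vonMangoldt n : ℝ) : ℂ)) := by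
  have hkey : DL κ = LamC := by
    have h1 : OneA * DL κ = OneA * LamC := by
      rw [OneA_mul_LamC, ← hκ, DL_ExpA κ hκ1]
    have h2 : OneA * (DL κ - LamC) = 0 := by rw [mul_sub, h1, sub_self]
    exact sub_eq_zero.mp (OneA_cancel _ h2)
  have hthird : ∀ n : ℕ, (Real.log n : ℂ) * κ n
      = ((ArithmeticFunction.vonMangoldt n : ℝ) : ℂ) := by
    intro n
    have := congrArg (fun f : ArithmeticFunction ℂ => f n) hkey
    simpa [DL_apply, LamC] using this
  refine ⟨?_, ?_, hthird⟩
  · intro p j hp hj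
    have h3 := hthird (p ^ j)
    rw [ArithmeticFunction.vonMangoldt_apply_pow (by omega),
      ArithmeticFunction.vonMangoldt_apply_prime hp] at h3
    have hlog : Real.log ((p : ℕ) ^ j : ℕ) = j * Real.log p := by
      push_cast
      rw [Real.log_pow]
    rw [hlog] at h3
    have hlp : Real.log p ≠ 0 := by
      have : (1:ℝ) < p := by exact_mod_cast hp.one_lt
      exact ne_of_gt (Real.log_pos this)
    have hlpC : ((Real.log p : ℝ) : ℂ) ≠ 0 := by exact_mod_cast hlp
    have hjC : (j : ℂ) ≠ 0 := Nat.cast_ne_zero.mpr (by omega)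
    rw [Complex.ofReal_mul, Complex.ofReal_natCast] at h3
    have h4 : ((Real.log p : ℝ) : ℂ) * (κ (p ^ j) * (j : ℂ))
        = ((Real.log p : ℝ) : ℂ) * 1 := by linear_combination h3
    have h5 := mul_left_cancel₀ hlpC h4
    rw [eq_div_iff hjC]
    simpa using h5
  · intro n hnp
    rcases Nat.eq_zero_or_pos n with rfl | hn
    · simp
    rcases eq_or_ne n 1 with rfl | h1
    · exact hκ1
    have hn2 : 2 ≤ n := by omega
    have h3 := hthird n
    have hLam : ArithmeticFunction.vonMangoldt n = 0 := by
      rw [ArithmeticFunction.vonMangoldt_eq_zero_iff]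
      intro hpp
      obtain ⟨p, k, hp, hk, hpk⟩ := (isPrimePow_nat_iff n).mp hpp
      exact hnp ⟨p, k, hp, hk, hpk.symm⟩
    rw [hLam] at h3
    have hlogn : Real.log n ≠ 0 := by
      have : (1:ℝ) < n := by exact_mod_cast hn2
      exact ne_of_gt (Real.log_pos this)
    have hC : ((Real.log n : ℝ) : ℂ) ≠ 0 := by exact_mod_cast hlogn
    rw [Complex.ofReal_zero] at h3
    exact (mul_eq_zero.mp h3).resolve_left hC
end

section
/- The constant-one arithmetic function 𝟙 is transcendental over the subalgebra 𝒯 of finitely supported arithmetic functions in the Dirichlet convolution ring; equivalently, the Riemann zeta function (as a formal Dirichlet series) is transcendental over the ring of Dirichlet polynomials. -/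
open ArithmeticFunction
open scoped Classical

section Aux17

lemma OneA_apply' (n : ℕ) : OneA n = if n = 0 then 0 else 1 := rfl

/-- The derivation `f n ↦ padicValNat p n * f n`. -/
noncomputable def D0 (p : ℕ) (f : ArithmeticFunction ℂ) : ArithmeticFunction ℂ :=
  ⟨fun n => (padicValNat p n : ℂ) * f n, by simp⟩

lemma D0_apply (p n : ℕ) (f : ArithmeticFunction ℂ) :
    D0 p f n = (padicValNat p n : ℂ) * f n := rfl

lemma D0_add (p : ℕ) (f g : ArithmeticFunction ℂ) : D0 p (f + g) = D0 p f + D0 p g := by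
  ext n; simp [D0_apply, mul_add]

lemma D0_zero (p : ℕ) : D0 p (0 : ArithmeticFunction ℂ) = 0 := by
  ext n; simp [D0_apply]

lemma D0_mul (p : ℕ) (hp : p.Prime) (f g : ArithmeticFunction ℂ) :
    D0 p (f * g) = D0 p f * g + f * D0 p g := by
  haveI : Fact p.Prime := ⟨hp⟩
  ext n
  simp only [D0_apply, ArithmeticFunction.mul_apply, ArithmeticFunction.add_apply,
    Finset.mul_sum, ← Finset.sum_add_distrib]
  refine Finset.sum_congr rfl ?_
  rintro ⟨d, e⟩ hde
  rw [Nat.mem_divisorsAntidiagonal] at hde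
  obtain ⟨hde1, hn0⟩ := hde
  have hd : d ≠ 0 := by rintro rfl; rw [← hde1] at hn0; simp at hn0
  have he : e ≠ 0 := by rintro rfl; rw [← hde1] at hn0; simp at hn0
  subst hde1
  rw [padicValNat.mul hd he]
  push_cast
  ring

lemma D0_eq_zero (p : ℕ) {c : ArithmeticFunction ℂ} (h : ∀ n, c n ≠ 0 → n < p) :
    D0 p c = 0 := by
  ext n
  simp only [D0_apply, ArithmeticFunction.zero_apply]
  rcases eq_or_ne (c n) 0 with h0 | h0
  · simp [h0]
  · have hn : n < p := h n h0
    have hn0 : n ≠ 0 := by rintro rfl; exact h0 (ArithmeticFunction.map_zero)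
    rw [padicValNat.eq_zero_of_not_dvd, Nat.cast_zero, zero_mul]
    intro hdvd
    exact absurd (Nat.le_of_dvd (Nat.pos_of_ne_zero hn0) hdvd) (not_le.mpr hn)

lemma D0_pow (p : ℕ) (hp : p.Prime) (f : ArithmeticFunction ℂ) (n : ℕ) :
    D0 p (f ^ (n + 1)) = (n + 1) • (f ^ n * D0 p f) := by
  induction n with
  | zero => simp
  | succ n ih =>
    rw [pow_succ, D0_mul p hp, ih, smul_mul_assoc, mul_right_comm, ← pow_succ, succ_nsmul, succ_nsmul, succ_nsmul]

lemma D0_eval (p : ℕ) (hp : p.Prime) (P : Polynomial (ArithmeticFunction ℂ))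
    (hc : ∀ k, D0 p (P.coeff k) = 0) (x : ArithmeticFunction ℂ) :
    D0 p (P.eval x) = P.derivative.eval x * D0 p x := by
  rw [Polynomial.eval_eq_sum, Polynomial.derivative_eval, Polynomial.sum_def,
    Polynomial.sum_def,
    show D0 p (∑ k ∈ P.support, P.coeff k * x ^ k)
        = ∑ k ∈ P.support, D0 p (P.coeff k * x ^ k) from
      map_sum (AddMonoidHom.mk' (D0 p) (D0_add p)) _ _,
    Finset.sum_mul]
  refine Finset.sum_congr rfl fun k _ => ?_
  rcases k with _ | n
  · rw [pow_zero, mul_one, hc 0]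
    simp
  · rw [D0_mul p hp, hc (n + 1), zero_mul, zero_add, D0_pow p hp, nsmul_eq_mul,
      Nat.add_sub_cancel]
    push_cast
    ring

lemma mul_ne_zero_AF {f g : ArithmeticFunction ℂ} (hf : f ≠ 0) (hg : g ≠ 0) :
    f * g ≠ 0 := by
  have hfe : {n : ℕ | f n ≠ 0}.Nonempty := by
    by_contra h
    rw [Set.not_nonempty_iff_eq_empty, Set.eq_empty_iff_forall_notMem] at h
    exact hf (ArithmeticFunction.ext fun n => not_not.mp (h n))
  have hge : {n : ℕ | g n ≠ 0}.Nonempty := by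
    by_contra h
    rw [Set.not_nonempty_iff_eq_empty, Set.eq_empty_iff_forall_notMem] at h
    exact hg (ArithmeticFunction.ext fun n => not_not.mp (h n))
  set a := sInf {n : ℕ | f n ≠ 0} with ha_def
  set b := sInf {n : ℕ | g n ≠ 0} with hb_def
  have ha : f a ≠ 0 := Nat.sInf_mem hfe
  have hb : g b ≠ 0 := Nat.sInf_mem hge
  have ha0 : a ≠ 0 := by rintro h; rw [h] at ha; exact ha ArithmeticFunction.map_zero
  have hb0 : b ≠ 0 := by rintro h; rw [h] at hb; exact hb ArithmeticFunction.map_zero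
  intro h0
  have hval : (f * g) (a * b) = 0 := by rw [h0]; rfl
  rw [ArithmeticFunction.mul_apply,
    Finset.sum_eq_single_of_mem (a, b)
      (Nat.mem_divisorsAntidiagonal.mpr ⟨rfl, mul_ne_zero ha0 hb0⟩)] at hval
  · exact mul_ne_zero ha hb hval
  · rintro ⟨d, e⟩ hde hne
    rw [Nat.mem_divisorsAntidiagonal] at hde
    obtain ⟨hde1, _⟩ := hde
    have hde2 : d * e = a * b := hde1
    by_contra hterm
    have hfd : f d ≠ 0 := fun h => hterm (by rw [h, zero_mul])
    have hge' : g e ≠ 0 := fun h => hterm (by rw [h, mul_zero])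
    have had : a ≤ d := Nat.sInf_le hfd
    have hbe : b ≤ e := Nat.sInf_le hge'
    have hda : d = a := by
      rcases lt_or_eq_of_le had with h | h
      · exfalso
        have h1 : a * b < d * b := (Nat.mul_lt_mul_right (Nat.pos_of_ne_zero hb0)).mpr h
        have h2 : d * b ≤ d * e := Nat.mul_le_mul_left d hbe
        omega
      · exact h.symm
    have heb : e = b := by
      subst hda
      exact Nat.eq_of_mul_eq_mul_left (Nat.pos_of_ne_zero (by omega)) hde2
    exact hne (by rw [hda, heb])

instance : NoZeroDivisors (ArithmeticFunction ℂ) :=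
  ⟨fun {f g} h => by
    by_contra hc
    push_neg at hc
    exact mul_ne_zero_AF hc.1 hc.2 h⟩

lemma natCast_apply_AF (m n : ℕ) :
    ((m : ℕ) : ArithmeticFunction ℂ) n = if n = 1 then (m : ℂ) else 0 := by
  induction m with
  | zero => simp
  | succ m ih =>
    rw [Nat.cast_succ, ArithmeticFunction.add_apply, ih, ArithmeticFunction.one_apply]
    by_cases h : n = 1 <;> simp [h]

instance : CharZero (ArithmeticFunction ℂ) :=
  ⟨fun m n h => by
    have := congrArg (fun f : ArithmeticFunction ℂ => f 1) h
    simp only [natCast_apply_AF, if_pos rfl] at this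
    exact_mod_cast this⟩

instance : NoZeroSMulDivisors ℕ (ArithmeticFunction ℂ) :=
  ⟨fun {n f} h => by
    rw [nsmul_eq_mul] at h
    rcases mul_eq_zero.mp h with h | h
    · left
      exact_mod_cast h
    · right; exact h⟩

lemma mul_natCast_apply_AF (f : ArithmeticFunction ℂ) (m n : ℕ) :
    (f * (m : ArithmeticFunction ℂ)) n = f n * m := by
  rcases eq_or_ne n 0 with rfl | hn
  · simp
  · rw [ArithmeticFunction.mul_apply,
      Finset.sum_eq_single_of_mem (n, 1) (Nat.mem_divisorsAntidiagonal.mpr ⟨mul_one n, hn⟩)]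
    · rw [natCast_apply_AF]; simp
    · rintro ⟨d, e⟩ hde hne
      rw [Nat.mem_divisorsAntidiagonal] at hde
      rcases eq_or_ne e 1 with rfl | he
      · exact absurd (by rw [← hde.1, mul_one]) (fun h : d = n => hne (by rw [h]))
      · rw [natCast_apply_AF, if_neg he, mul_zero]

end Aux17

/-- The constant one function `𝟙` (the Riemann zeta function as Dirichlet series) is
transcendental over the subalgebra `𝒯` of finitely supported arithmetic functions
(Dirichlet polynomials): any polynomial with finitely supported coefficients
vanishing at `𝟙` is zero. -/
theorem stmt17 (P : Polynomial (ArithmeticFunction ℂ))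
    (hcoeff : ∀ k, {n : ℕ | (P.coeff k) n ≠ 0}.Finite)
    (hroot : Polynomial.eval OneA P = 0) :
    P = 0 := by
  suffices H : ∀ (d : ℕ) (P : Polynomial (ArithmeticFunction ℂ)), P.natDegree ≤ d →
      (∀ k, {n : ℕ | (P.coeff k) n ≠ 0}.Finite) → Polynomial.eval OneA P = 0 → P = 0 from
    H P.natDegree P le_rfl hcoeff hroot
  intro d
  induction d with
  | zero =>
    intro P hd hc hr
    have hP : P = Polynomial.C (P.coeff 0) := Polynomial.eq_C_of_natDegree_le_zero hd
    rw [hP, Polynomial.eval_C] at hr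
    rw [hP, hr, Polynomial.C_0]
  | succ d ih =>
    intro P hd hc hr
    -- choose a prime larger than everything in the supports of the coefficients
    have hfin : (⋃ k ∈ Finset.range (d + 2), {n : ℕ | (P.coeff k) n ≠ 0}).Finite :=
      Set.Finite.biUnion (Finset.range (d + 2)).finite_toSet (fun k _ => hc k)
    obtain ⟨N, hN⟩ := hfin.bddAbove
    obtain ⟨p, hpN, hp⟩ := Nat.exists_infinite_primes (N + 1)
    have hkill : ∀ k, D0 p (P.coeff k) = 0 := by
      intro k
      apply D0_eq_zero
      intro n hn
      by_cases hk : k < d + 2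
      · have hmem : n ∈ ⋃ k ∈ Finset.range (d + 2), {n : ℕ | (P.coeff k) n ≠ 0} :=
          Set.mem_biUnion (Finset.mem_coe.mpr (Finset.mem_range.mpr hk)) hn
        have := hN hmem
        omega
      · have h0 : P.coeff k = 0 :=
          Polynomial.coeff_eq_zero_of_natDegree_lt (by omega)
        rw [h0] at hn
        simp at hn
    have hD : Polynomial.eval OneA P.derivative * D0 p OneA = 0 := by
      rw [← D0_eval p hp P hkill OneA, hr, D0_zero]
    have hz : D0 p OneA ≠ 0 := by
      intro h
      have h2 := congrArg (fun f : ArithmeticFunction ℂ => f p) h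
      simp only [D0_apply, ArithmeticFunction.zero_apply] at h2
      rw [padicValNat.self hp.one_lt, OneA_apply', if_neg hp.ne_zero] at h2
      norm_num at h2
    have hder : Polynomial.eval OneA P.derivative = 0 := by
      rcases mul_eq_zero.mp hD with h | h
      · exact h
      · exact absurd h hz
    have hderc : ∀ k, {n : ℕ | (P.derivative.coeff k) n ≠ 0}.Finite := by
      intro k
      apply Set.Finite.subset (hc (k + 1))
      intro n hn
      simp only [Set.mem_setOf_eq, Polynomial.coeff_derivative] at hn ⊢
      intro h0
      apply hn
      rw [show ((k : ArithmeticFunction ℂ) + 1) = ((k + 1 : ℕ) : ArithmeticFunction ℂ) by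
        push_cast; ring, mul_natCast_apply_AF, h0, zero_mul]
    have hdd : P.derivative.natDegree ≤ d := by
      have := Polynomial.natDegree_derivative_le P
      omega
    have hPd : P.derivative = 0 := ih P.derivative hdd hderc hder
    have h0 : P.natDegree = 0 := Polynomial.natDegree_eq_zero_of_derivative_eq_zero hPd
    have hP : P = Polynomial.C (P.coeff 0) := Polynomial.eq_C_of_natDegree_eq_zero h0
    rw [hP, Polynomial.eval_C] at hr
    rw [hP, hr, Polynomial.C_0]
end
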